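/- arXiv:2506.09871 — 6 statements merged into one kernel-verified Lean document; each statement's English description precedes it below -/
import Mathlib

section
/- Let 𝒴 ⊂ ℝ be a finite set, let 𝒜, 𝒰, 𝒱 be finite types, let p be a strictly positive probability mass function on 𝒴 × 𝒜 × 𝒰 × 𝒱, and fix a ∈ 𝒜. Then the influence function ψ_a has mean zero under p: ∑_{(y,a′,u,v)} p(y,a′,u,v) · ψ_a(y,a′,u,v) = 0. -/
open Finset

noncomputable section

variable {Y : Finset ℝ} {A U V : Type}
variable [Fintype A] [Fintype U] [Fintype V] [DecidableEq A]

/-- Marginal of `p` on the mediator part `U`. -/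
def pU (p : Y × A × U × V → ℝ) (u : U) : ℝ :=
  ∑ y : Y, ∑ a : A, ∑ v : V, p (y, a, u, v)

/-- Marginal of `p` on the non-mediator part `V`. -/
def pV (p : Y × A × U × V → ℝ) (v : V) : ℝ :=
  ∑ y : Y, ∑ a : A, ∑ u : U, p (y, a, u, v)

/-- Joint marginal of `p` on `(A, U, V)`. -/
def pAUV (p : Y × A × U × V → ℝ) (a : A) (u : U) (v : V) : ℝ :=
  ∑ y : Y, p (y, a, u, v)

/-- Outcome regression `m(u,v) = ∑_y y · p(y | a, u, v)`. -/
def mReg (p : Y × A × U × V → ℝ) (a : A) (u : U) (v : V) : ℝ :=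
  ∑ y : Y, (y : ℝ) * (p (y, a, u, v) / pAUV p a u v)

/-- Target parameter `T_a(p) = ∑_u p(u) ∑_v p(v) m(u,v)`. -/
def Ta (p : Y × A × U × V → ℝ) (a : A) : ℝ :=
  ∑ u : U, pU p u * ∑ v : V, pV p v * mReg p a u v

/-- Influence function of the adjusted functional for the WCDE. -/
def psi (p : Y × A × U × V → ℝ) (a : A) : Y × A × U × V → ℝ :=
  fun (y, a', u, v) =>
    (if a' = a then (1 : ℝ) else 0) * (pU p u * pV p v / pAUV p a u v) *
        ((y : ℝ) - mReg p a u v)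
      + (∑ v' : V, pV p v' * mReg p a u v')
      + (∑ u' : U, pU p u' * mReg p a u' v)
      - 2 * Ta p a

lemma sum_u_out (F : Y → A → U → V → ℝ) :
    ∑ y : Y, ∑ a : A, ∑ u : U, ∑ v : V, F y a u v
      = ∑ u : U, ∑ y : Y, ∑ a : A, ∑ v : V, F y a u v :=
  (Finset.sum_congr rfl fun _ _ => Finset.sum_comm).trans Finset.sum_comm

lemma sum_v_out (F : Y → A → U → V → ℝ) :
    ∑ y : Y, ∑ a : A, ∑ u : U, ∑ v : V, F y a u v
      = ∑ v : V, ∑ y : Y, ∑ a : A, ∑ u : U, F y a u v := by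
  calc ∑ y : Y, ∑ a : A, ∑ u : U, ∑ v : V, F y a u v
      = ∑ y : Y, ∑ a : A, ∑ v : V, ∑ u : U, F y a u v :=
        Finset.sum_congr rfl fun _ _ => Finset.sum_congr rfl fun _ _ => Finset.sum_comm
    _ = ∑ y : Y, ∑ v : V, ∑ a : A, ∑ u : U, F y a u v :=
        Finset.sum_congr rfl fun _ _ => Finset.sum_comm
    _ = ∑ v : V, ∑ y : Y, ∑ a : A, ∑ u : U, F y a u v := Finset.sum_comm

lemma sum_reorder (F : Y → A → U → V → ℝ) :
    ∑ y : Y, ∑ a : A, ∑ u : U, ∑ v : V, F y a u v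
      = ∑ u : U, ∑ v : V, ∑ a : A, ∑ y : Y, F y a u v := by
  rw [sum_u_out]
  refine Finset.sum_congr rfl fun u _ => ?_
  calc ∑ y : Y, ∑ a : A, ∑ v : V, F y a u v
      = ∑ y : Y, ∑ v : V, ∑ a : A, F y a u v :=
        Finset.sum_congr rfl fun _ _ => Finset.sum_comm
    _ = ∑ v : V, ∑ y : Y, ∑ a : A, F y a u v := Finset.sum_comm
    _ = ∑ v : V, ∑ a : A, ∑ y : Y, F y a u v :=
        Finset.sum_congr rfl fun _ _ => Finset.sum_comm

lemma sum_mul_fun_u (p : Y × A × U × V → ℝ) (f : U → ℝ) :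
    ∑ o : Y × A × U × V, p o * f o.2.2.1 = ∑ u : U, pU p u * f u := by
  simp only [Fintype.sum_prod_type]
  rw [sum_u_out (fun y a u v => p (y, a, u, v) * f u)]
  simp only [pU, Finset.sum_mul]

lemma sum_mul_fun_v (p : Y × A × U × V → ℝ) (f : V → ℝ) :
    ∑ o : Y × A × U × V, p o * f o.2.2.2 = ∑ v : V, pV p v * f v := by
  simp only [Fintype.sum_prod_type]
  rw [sum_v_out (fun y a u v => p (y, a, u, v) * f v)]
  simp only [pV, Finset.sum_mul]

/-- The influence function of the WCDE functional has mean zero. -/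
theorem psi_mean_zero (p : Y × A × U × V → ℝ)
    (hpos : ∀ o, 0 < p o) (hsum : ∑ o, p o = 1) (a : A) :
    ∑ o : Y × A × U × V, p o * psi p a o = 0 := by
  haveI hY : Nonempty Y := by
    by_contra h
    rw [not_nonempty_iff] at h
    haveI : IsEmpty (Y × A × U × V) := ⟨fun o => h.false o.1⟩
    rw [Finset.univ_eq_empty, Finset.sum_empty] at hsum
    exact one_ne_zero hsum.symm
  have hA : ∀ u v, 0 < pAUV p a u v := fun u v =>
    Finset.sum_pos (fun y _ => hpos _) Finset.univ_nonempty
  have hm : ∀ u v, ∑ y : Y, (y : ℝ) * p (y, a, u, v) = pAUV p a u v * mReg p a u v := by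
    intro u v
    have h0 : pAUV p a u v ≠ 0 := (hA u v).ne'
    rw [mReg, Finset.mul_sum]
    refine Finset.sum_congr rfl fun y _ => ?_
    field_simp
  have key : ∀ u v, ∑ y : Y, p (y, a, u, v) * ((y : ℝ) - mReg p a u v) = 0 := by
    intro u v
    have h1 : ∑ y : Y, p (y, a, u, v) * ((y : ℝ) - mReg p a u v)
        = (∑ y : Y, (y : ℝ) * p (y, a, u, v))
          - (∑ y : Y, p (y, a, u, v)) * mReg p a u v := by
      rw [Finset.sum_mul, ← Finset.sum_sub_distrib]
      exact Finset.sum_congr rfl fun y _ => by ring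
    have h2 : (∑ y : Y, p (y, a, u, v)) = pAUV p a u v := rfl
    rw [h1, hm u v, h2]
    ring
  have expand : ∀ o : Y × A × U × V, p o * psi p a o
      = p o * ((if o.2.1 = a then (1 : ℝ) else 0)
            * (pU p o.2.2.1 * pV p o.2.2.2 / pAUV p a o.2.2.1 o.2.2.2)
            * ((o.1 : ℝ) - mReg p a o.2.2.1 o.2.2.2))
        + p o * (∑ v' : V, pV p v' * mReg p a o.2.2.1 v')
        + p o * (∑ u' : U, pU p u' * mReg p a u' o.2.2.2)
        - p o * (2 * Ta p a) := by
    rintro ⟨y, a', u, v⟩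
    simp only [psi]
    ring
  rw [Finset.sum_congr rfl fun o _ => expand o, Finset.sum_sub_distrib,
    Finset.sum_add_distrib, Finset.sum_add_distrib]
  have hS1 : ∑ o : Y × A × U × V, p o * ((if o.2.1 = a then (1 : ℝ) else 0)
        * (pU p o.2.2.1 * pV p o.2.2.2 / pAUV p a o.2.2.1 o.2.2.2)
        * ((o.1 : ℝ) - mReg p a o.2.2.1 o.2.2.2)) = 0 := by
    simp only [Fintype.sum_prod_type]
    rw [sum_reorder (fun y a' u v => p (y, a', u, v) * ((if a' = a then (1 : ℝ) else 0)
        * (pU p u * pV p v / pAUV p a u v) * ((y : ℝ) - mReg p a u v)))]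
    refine Finset.sum_eq_zero fun u _ => ?_
    refine Finset.sum_eq_zero fun v _ => ?_
    have h1 : ∀ a' : A, (∑ y : Y, p (y, a', u, v) * ((if a' = a then (1 : ℝ) else 0)
          * (pU p u * pV p v / pAUV p a u v) * ((y : ℝ) - mReg p a u v)))
        = if a' = a then (pU p u * pV p v / pAUV p a u v)
            * ∑ y : Y, p (y, a', u, v) * ((y : ℝ) - mReg p a u v) else 0 := by
      intro a'
      by_cases h : a' = a
      · simp only [h, if_true, one_mul, Finset.mul_sum]
        exact Finset.sum_congr rfl fun y _ => by ring
      · simp [h]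
    simp only [h1, Finset.sum_ite_eq' Finset.univ a, Finset.mem_univ, if_true]
    rw [key u v, mul_zero]
  have hS2 : ∑ o : Y × A × U × V, p o * (∑ v' : V, pV p v' * mReg p a o.2.2.1 v')
      = Ta p a := by
    rw [sum_mul_fun_u p (fun u => ∑ v' : V, pV p v' * mReg p a u v')]
    rfl
  have hS3 : ∑ o : Y × A × U × V, p o * (∑ u' : U, pU p u' * mReg p a u' o.2.2.2)
      = Ta p a := by
    rw [sum_mul_fun_v p (fun v => ∑ u' : U, pU p u' * mReg p a u' v)]
    rw [Ta]
    simp only [Finset.mul_sum]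
    rw [Finset.sum_comm]
    exact Finset.sum_congr rfl fun u _ => Finset.sum_congr rfl fun v _ => by ring
  have hS4 : ∑ o : Y × A × U × V, p o * (2 * Ta p a) = 2 * Ta p a := by
    rw [← Finset.sum_mul, hsum, one_mul]
  rw [hS1, hS2, hS3, hS4]
  ring

end
end

section
/- Let 𝒳, 𝒲, ℛ be finite types, let p be a strictly positive probability mass function on 𝒳 × 𝒲 × ℛ, let S : 𝒳 × 𝒲 × ℛ → ℝ satisfy ∑ p·S = 0, and set p_t := p·(1 + t·S). Then for each (x,w), the map t ↦ p_t(w | x) := p_t(x,w)/p_t(x) (defined for t near 0) is differentiable at t = 0 with derivative (E_p[S | X=x, W=w] − E_p[S | X=x]) · p(w | x), where p_t(x,w) and p_t(x) denote the indicated marginals of p_t and E_p[S | ·] denotes conditional expectation under p. -/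
open Finset

noncomputable section

variable {X W R : Type}
variable [Fintype X] [Fintype W] [Fintype R]

/-- Marginal of a function `q` on `(X, W)`. -/
def pXW (q : X × W × R → ℝ) (x : X) (w : W) : ℝ :=
  ∑ r : R, q (x, w, r)

/-- Marginal of a function `q` on `X`. -/
def pX (q : X × W × R → ℝ) (x : X) : ℝ :=
  ∑ w : W, ∑ r : R, q (x, w, r)

/-- Conditional expectation `E_p[S | X = x, W = w]`. -/
def condExpXW (p S : X × W × R → ℝ) (x : X) (w : W) : ℝ :=
  ∑ r : R, S (x, w, r) * (p (x, w, r) / pXW p x w)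

/-- Conditional expectation `E_p[S | X = x]`. -/
def condExpX (p S : X × W × R → ℝ) (x : X) : ℝ :=
  ∑ w : W, ∑ r : R, S (x, w, r) * (p (x, w, r) / pX p x)

/-- Discrete form of Levy's lemma: along the score-perturbed submodel
`p_t = p·(1 + t·S)`, the conditional density `p_t(w | x)` is
differentiable at `t = 0` with derivative
`(E_p[S | X=x, W=w] − E_p[S | X=x]) · p(w | x)`. -/
theorem hasDerivAt_cond_density (p : X × W × R → ℝ)
    (hpos : ∀ o, 0 < p o) (hsum : ∑ o, p o = 1)
    (S : X × W × R → ℝ) (hS : ∑ o, p o * S o = 0)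
    (x : X) (w : W) :
    HasDerivAt
      (fun t : ℝ =>
        pXW (fun o => p o * (1 + t * S o)) x w /
          pX (fun o => p o * (1 + t * S o)) x)
      ((condExpXW p S x w - condExpX p S x) * (pXW p x w / pX p x)) 0 := by
  have hne : Nonempty (X × W × R) := by
    by_contra h
    rw [not_nonempty_iff] at h
    simp [Finset.univ_eq_empty] at hsum
  haveI : Nonempty W := ⟨hne.some.2.1⟩
  haveI : Nonempty R := ⟨hne.some.2.2⟩
  set a : ℝ := pXW p x w with ha
  set c : ℝ := pX p x with hc
  set b : ℝ := ∑ r : R, p (x, w, r) * S (x, w, r) with hb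
  set d : ℝ := ∑ w' : W, ∑ r : R, p (x, w', r) * S (x, w', r) with hd
  have hapos : 0 < a := Finset.sum_pos (fun r _ => hpos _) Finset.univ_nonempty
  have hcpos : 0 < c := by
    refine Finset.sum_pos (fun w' _ => ?_) Finset.univ_nonempty
    exact Finset.sum_pos (fun r _ => hpos _) Finset.univ_nonempty
  have ha0 : a ≠ 0 := ne_of_gt hapos
  have hc0 : c ≠ 0 := ne_of_gt hcpos
  have hN : ∀ t : ℝ, pXW (fun o => p o * (1 + t * S o)) x w = a + t * b := by
    intro t
    simp only [ha, hb, pXW, Finset.mul_sum, ← Finset.sum_add_distrib]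
    exact Finset.sum_congr rfl fun r _ => by ring
  have hD : ∀ t : ℝ, pX (fun o => p o * (1 + t * S o)) x = c + t * d := by
    intro t
    simp only [hc, hd, pX, Finset.mul_sum, ← Finset.sum_add_distrib]
    refine Finset.sum_congr rfl fun w' _ => ?_
    exact Finset.sum_congr rfl fun r _ => by ring
  have h1 : HasDerivAt (fun t : ℝ => a + t * b) b 0 :=
    (hasDerivAt_mul_const b).const_add a
  have h2 : HasDerivAt (fun t : ℝ => c + t * d) d 0 :=
    (hasDerivAt_mul_const d).const_add c
  have hg0 : c + (0 : ℝ) * d ≠ 0 := by simpa using hc0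
  have h3 := h1.div h2 hg0
  have heq : (b * (c + 0 * d) - (a + 0 * b) * d) / (c + 0 * d) ^ 2
      = (condExpXW p S x w - condExpX p S x) * (a / c) := by
    have hXW : condExpXW p S x w = b / a := by
      simp only [condExpXW, ← ha, hb, div_eq_mul_inv, Finset.sum_mul]
      exact Finset.sum_congr rfl fun r _ => by ring
    have hX : condExpX p S x = d / c := by
      simp only [condExpX, ← hc, hd, div_eq_mul_inv, Finset.sum_mul]
      refine Finset.sum_congr rfl fun w' _ => ?_
      exact Finset.sum_congr rfl fun r _ => by ring
    rw [hXW, hX]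
    field_simp
    ring
  rw [← heq]
  have hfun : (fun t : ℝ => pXW (fun o => p o * (1 + t * S o)) x w /
      pX (fun o => p o * (1 + t * S o)) x) = fun y => (a + y * b) / (c + y * d) :=
    funext fun t => by rw [hN t, hD t]
  rw [hfun]
  exact h3

end
end

section
/- Let 𝒴 ⊂ ℝ be a finite set, let 𝒜, 𝒲, 𝒵₁, 𝒞 be finite types, let p be a strictly positive probability mass function on 𝒴 × 𝒜 × 𝒲 × 𝒵₁ × 𝒞, and fix a ∈ 𝒜. If W ⊥ (A, C) | Z₁ under p, then ∑_{z₁} p(z₁) ∑_c p(c) E[Y | A=a, Z₁=z₁, C=c] = ∑_{(w,z₁)} p(w,z₁) ∑_c p(c) E[Y | A=a, W=w, Z₁=z₁, C=c], where E[Y | ·] := ∑_y y · p(y | ·). -/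
open Finset

noncomputable section

variable {Y : Finset ℝ} {A W Z₁ C : Type}
variable [Fintype A] [Fintype W] [Fintype Z₁] [Fintype C]

/-- Marginal `p(z₁)`. -/
def pZ1 (p : Y × A × W × Z₁ × C → ℝ) (z₁ : Z₁) : ℝ :=
  ∑ y : Y, ∑ a : A, ∑ w : W, ∑ c : C, p (y, a, w, z₁, c)

/-- Marginal `p(c)`. -/
def pC (p : Y × A × W × Z₁ × C → ℝ) (c : C) : ℝ :=
  ∑ y : Y, ∑ a : A, ∑ w : W, ∑ z₁ : Z₁, p (y, a, w, z₁, c)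

/-- Marginal `p(w, z₁)`. -/
def pWZ1 (p : Y × A × W × Z₁ × C → ℝ) (w : W) (z₁ : Z₁) : ℝ :=
  ∑ y : Y, ∑ a : A, ∑ c : C, p (y, a, w, z₁, c)

/-- Marginal `p(a, z₁, c)`. -/
def pAZ1C (p : Y × A × W × Z₁ × C → ℝ) (a : A) (z₁ : Z₁) (c : C) : ℝ :=
  ∑ y : Y, ∑ w : W, p (y, a, w, z₁, c)

/-- Marginal `p(a, w, z₁, c)`. -/
def pAWZ1C (p : Y × A × W × Z₁ × C → ℝ) (a : A) (w : W) (z₁ : Z₁) (c : C) : ℝ :=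
  ∑ y : Y, p (y, a, w, z₁, c)

/-- Outcome regression `E[Y | A = a, Z₁ = z₁, C = c]`. -/
def EY (p : Y × A × W × Z₁ × C → ℝ) (a : A) (z₁ : Z₁) (c : C) : ℝ :=
  ∑ y : Y, (y : ℝ) * ((∑ w : W, p (y, a, w, z₁, c)) / pAZ1C p a z₁ c)

/-- Outcome regression `E[Y | A = a, W = w, Z₁ = z₁, C = c]`. -/
def EYW (p : Y × A × W × Z₁ × C → ℝ) (a : A) (w : W) (z₁ : Z₁) (c : C) : ℝ :=
  ∑ y : Y, (y : ℝ) * (p (y, a, w, z₁, c) / pAWZ1C p a w z₁ c)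

/-- Conditional independence `W ⊥ (A, C) | Z₁` under `p`:
`p(w, (a, c) | z₁) = p(w | z₁) · p((a, c) | z₁)`. -/
def CI_W_AC_Z1 (p : Y × A × W × Z₁ × C → ℝ) : Prop :=
  ∀ (w : W) (a : A) (c : C) (z₁ : Z₁),
    pAWZ1C p a w z₁ c / pZ1 p z₁ =
      (pWZ1 p w z₁ / pZ1 p z₁) * (pAZ1C p a z₁ c / pZ1 p z₁)

/-- Sufficiency direction of Lemma 2.1: under `W ⊥ (A, C) | Z₁`,
augmenting the mediator component `Z₁` by the remaining mediating
parents `W` of the outcome leaves the adjusted functional unchanged. -/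
theorem adjusted_functional_augment_mediators
    (p : Y × A × W × Z₁ × C → ℝ)
    (hpos : ∀ o, 0 < p o) (hsum : ∑ o, p o = 1) (a : A)
    (hCI : CI_W_AC_Z1 p) :
    ∑ z₁ : Z₁, pZ1 p z₁ * ∑ c : C, pC p c * EY p a z₁ c =
      ∑ w : W, ∑ z₁ : Z₁, pWZ1 p w z₁ * ∑ c : C, pC p c * EYW p a w z₁ c := by
  have hempty : Nonempty (Y × A × W × Z₁ × C) := by
    by_contra h
    rw [not_nonempty_iff] at h
    rw [Finset.univ_eq_empty, Finset.sum_empty] at hsum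
    norm_num at hsum
  obtain ⟨⟨y0, a0, w0, z0, c0⟩⟩ := hempty
  haveI : Nonempty Y := ⟨y0⟩
  haveI : Nonempty A := ⟨a0⟩
  haveI : Nonempty W := ⟨w0⟩
  haveI : Nonempty Z₁ := ⟨z0⟩
  haveI : Nonempty C := ⟨c0⟩
  have hZ1 : ∀ z₁, 0 < pZ1 p z₁ := fun z₁ =>
    Finset.sum_pos (fun y _ => Finset.sum_pos (fun a' _ => Finset.sum_pos
      (fun w _ => Finset.sum_pos (fun c _ => hpos _) univ_nonempty) univ_nonempty)
      univ_nonempty) univ_nonempty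
  have hAZ1C : ∀ z₁ c, 0 < pAZ1C p a z₁ c := fun z₁ c =>
    Finset.sum_pos (fun y _ => Finset.sum_pos (fun w _ => hpos _) univ_nonempty)
      univ_nonempty
  have hAWZ1C : ∀ w z₁ c, 0 < pAWZ1C p a w z₁ c := fun w z₁ c =>
    Finset.sum_pos (fun y _ => hpos _) univ_nonempty
  have hkey : ∀ w z₁ c, pWZ1 p w z₁ / pAWZ1C p a w z₁ c = pZ1 p z₁ / pAZ1C p a z₁ c := by
    intro w z₁ c
    have h := hCI w a c z₁
    have hz := (hZ1 z₁).ne'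
    rw [div_mul_div_comm, div_eq_div_iff hz (by positivity)] at h
    rw [div_eq_div_iff (hAWZ1C w z₁ c).ne' (hAZ1C z₁ c).ne']
    have h2 : pAWZ1C p a w z₁ c * pZ1 p z₁ * pZ1 p z₁
        = pWZ1 p w z₁ * pAZ1C p a z₁ c * pZ1 p z₁ := by ring_nf; ring_nf at h; linarith
    have h3 := mul_right_cancel₀ hz h2
    linarith
  have step : ∀ z₁ c, pZ1 p z₁ * (pC p c * EY p a z₁ c)
      = ∑ w : W, pWZ1 p w z₁ * (pC p c * EYW p a w z₁ c) := by
    intro z₁ c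
    have key2 : ∀ w : W, pWZ1 p w z₁ * (pC p c * EYW p a w z₁ c)
        = ∑ y : Y, pC p c * ((y : ℝ) * p (y, a, w, z₁, c)
            * (pZ1 p z₁ / pAZ1C p a z₁ c)) := by
      intro w
      unfold EYW
      rw [Finset.mul_sum, Finset.mul_sum]
      refine Finset.sum_congr rfl fun y _ => ?_
      rw [← hkey w z₁ c]
      field_simp
    rw [Finset.sum_congr rfl fun w _ => key2 w, Finset.sum_comm]
    unfold EY
    rw [Finset.mul_sum, Finset.mul_sum]
    refine Finset.sum_congr rfl fun y _ => ?_
    have h3 : ∀ w : W, pC p c * ((y : ℝ) * p (y, a, w, z₁, c)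
          * (pZ1 p z₁ / pAZ1C p a z₁ c))
        = p (y, a, w, z₁, c) * (pC p c * ((y : ℝ)
            * (pZ1 p z₁ / pAZ1C p a z₁ c))) := fun w => by ring
    rw [Finset.sum_congr rfl fun w _ => h3 w, ← Finset.sum_mul]
    field_simp
  calc ∑ z₁ : Z₁, pZ1 p z₁ * ∑ c : C, pC p c * EY p a z₁ c
      = ∑ z₁ : Z₁, ∑ c : C, ∑ w : W,
          pWZ1 p w z₁ * (pC p c * EYW p a w z₁ c) := by
        refine Finset.sum_congr rfl fun z₁ _ => ?_
        rw [Finset.mul_sum]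
        exact Finset.sum_congr rfl fun c _ => step z₁ c
    _ = ∑ z₁ : Z₁, ∑ w : W, ∑ c : C,
          pWZ1 p w z₁ * (pC p c * EYW p a w z₁ c) :=
        Finset.sum_congr rfl fun z₁ _ => Finset.sum_comm
    _ = ∑ w : W, ∑ z₁ : Z₁, ∑ c : C,
          pWZ1 p w z₁ * (pC p c * EYW p a w z₁ c) := Finset.sum_comm
    _ = ∑ w : W, ∑ z₁ : Z₁, pWZ1 p w z₁ * ∑ c : C, pC p c * EYW p a w z₁ c :=
        Finset.sum_congr rfl fun w _ => Finset.sum_congr rfl fun z₁ _ =>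
          (Finset.mul_sum _ _ _).symm

end
end

section
/- Let 𝒴 ⊂ ℝ be a finite set, let 𝒜, 𝒲, 𝒵₁, 𝒞 be finite types, let p be a strictly positive probability mass function on 𝒴 × 𝒜 × 𝒲 × 𝒵₁ × 𝒞, and fix a ∈ 𝒜. Then ∑_{(w,z₁)} p(w,z₁) ∑_c p(c) E[Y | A=a, W=w, Z₁=z₁, C=c] − ∑_{z₁} p(z₁) ∑_c p(c) E[Y | A=a, Z₁=z₁, C=c] = ∑_{z₁} p(z₁) ∑_c p(c) ∑_w E[Y | A=a, W=w, Z₁=z₁, C=c] · ( p(w | z₁) − p(w | A=a, Z₁=z₁, C=c) ), where E[Y | ·] := ∑_y y · p(y | ·). -/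
open Finset

noncomputable section

variable {Y : Finset ℝ} {A W Z₁ C : Type}
variable [Fintype A] [Fintype W] [Fintype Z₁] [Fintype C]

/-- Bias identity in the necessity direction of Lemma 2.1: the discrepancy
between the adjusted functional computed with the full mediating parents
`(W, Z₁)` and with `Z₁` alone is driven by `p(w | z₁) − p(w | a, z₁, c)`. -/
theorem adjusted_functional_bias_identity
    (p : Y × A × W × Z₁ × C → ℝ)
    (hpos : ∀ o, 0 < p o) (hsum : ∑ o, p o = 1) (a : A) :
    (∑ w : W, ∑ z₁ : Z₁, pWZ1 p w z₁ * ∑ c : C, pC p c * EYW p a w z₁ c)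
      - (∑ z₁ : Z₁, pZ1 p z₁ * ∑ c : C, pC p c * EY p a z₁ c) =
    ∑ z₁ : Z₁, pZ1 p z₁ * ∑ c : C, pC p c *
      ∑ w : W, EYW p a w z₁ c *
        (pWZ1 p w z₁ / pZ1 p z₁ - pAWZ1C p a w z₁ c / pAZ1C p a z₁ c) := by
  have hne : Nonempty (Y × A × W × Z₁ × C) := by
    by_contra h
    rw [not_nonempty_iff] at h
    simp [Finset.univ_eq_empty] at hsum
  obtain ⟨⟨y0, a0, w0, z0, c0⟩⟩ := hne
  haveI : Nonempty ↥Y := ⟨y0⟩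
  haveI : Nonempty A := ⟨a0⟩
  haveI : Nonempty W := ⟨w0⟩
  haveI : Nonempty Z₁ := ⟨z0⟩
  haveI : Nonempty C := ⟨c0⟩
  have hZ : ∀ z₁, 0 < pZ1 p z₁ := fun z₁ => by
    refine Finset.sum_pos (fun y _ => ?_) Finset.univ_nonempty
    refine Finset.sum_pos (fun a' _ => ?_) Finset.univ_nonempty
    refine Finset.sum_pos (fun w _ => ?_) Finset.univ_nonempty
    exact Finset.sum_pos (fun c _ => hpos _) Finset.univ_nonempty
  have hAZC : ∀ z₁ c, 0 < pAZ1C p a z₁ c := fun z₁ c => by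
    refine Finset.sum_pos (fun y _ => ?_) Finset.univ_nonempty
    exact Finset.sum_pos (fun w _ => hpos _) Finset.univ_nonempty
  have hAWZC : ∀ w z₁ c, 0 < pAWZ1C p a w z₁ c := fun w z₁ c =>
    Finset.sum_pos (fun y _ => hpos _) Finset.univ_nonempty
  have hEY : ∀ z₁ c, EY p a z₁ c =
      ∑ w : W, EYW p a w z₁ c * (pAWZ1C p a w z₁ c / pAZ1C p a z₁ c) := by
    intro z₁ c
    unfold EY EYW
    simp only [Finset.sum_mul]
    rw [Finset.sum_comm]
    refine Finset.sum_congr rfl fun y _ => ?_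
    rw [Finset.sum_div, Finset.mul_sum]
    refine Finset.sum_congr rfl fun w _ => ?_
    field_simp [(hAWZC w z₁ c).ne']
  rw [Finset.sum_comm, ← Finset.sum_sub_distrib]
  refine Finset.sum_congr rfl fun z₁ _ => ?_
  rw [show (∑ w : W, pWZ1 p w z₁ * ∑ c : C, pC p c * EYW p a w z₁ c)
    = ∑ c : C, ∑ w : W, pWZ1 p w z₁ * (pC p c * EYW p a w z₁ c) from by
      rw [Finset.sum_comm]; exact Finset.sum_congr rfl fun w _ => Finset.mul_sum ..]
  simp only [hEY]
  rw [Finset.mul_sum, Finset.mul_sum, ← Finset.sum_sub_distrib]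
  refine Finset.sum_congr rfl fun c _ => ?_
  rw [show pZ1 p z₁ * (pC p c * ∑ w : W, EYW p a w z₁ c * (pAWZ1C p a w z₁ c / pAZ1C p a z₁ c))
    = ∑ w : W, pZ1 p z₁ * (pC p c * (EYW p a w z₁ c * (pAWZ1C p a w z₁ c / pAZ1C p a z₁ c))) from by
      rw [Finset.mul_sum, Finset.mul_sum],
    show pZ1 p z₁ * (pC p c * ∑ w : W, EYW p a w z₁ c *
        (pWZ1 p w z₁ / pZ1 p z₁ - pAWZ1C p a w z₁ c / pAZ1C p a z₁ c))
    = ∑ w : W, pZ1 p z₁ * (pC p c * (EYW p a w z₁ c *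
        (pWZ1 p w z₁ / pZ1 p z₁ - pAWZ1C p a w z₁ c / pAZ1C p a z₁ c))) from by
      rw [Finset.mul_sum, Finset.mul_sum],
    ← Finset.sum_sub_distrib]
  refine Finset.sum_congr rfl fun w _ => ?_
  field_simp [(hZ z₁).ne', (hAZC z₁ c).ne']

end
end

section
/- Let 𝒴 ⊂ ℝ be a finite set, let 𝒜, 𝒢₁, 𝒢₂, ℬ₂ be finite types, let p be a strictly positive probability mass function on 𝒴 × 𝒜 × 𝒢₁ × 𝒢₂ × ℬ₂, and fix a ∈ 𝒜. If G₂ ⊥ (A, G₁) | B₂ under p, then the two adjusted functionals coincide: ∑_{g₁} p(g₁) ∑_{(g₂,b₂)} p(g₂,b₂) · m₂(g₁,g₂,b₂) = ∑_{g₁} p(g₁) ∑_{b₂} p(b₂) · m₁(g₁,b₂), where m₂(g₁,g₂,b₂) := ∑_y y·p(y | A=a, g₁, g₂, b₂) and m₁(g₁,b₂) := ∑_y y·p(y | A=a, g₁, b₂). -/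
open Finset

noncomputable section

variable {Y : Finset ℝ} {A G₁ G₂ B₂ : Type}
variable [Fintype A] [Fintype G₁] [Fintype G₂] [Fintype B₂] [DecidableEq A]

/-- Marginal `p(g₁)`. -/
def pG1 (p : Y × A × G₁ × G₂ × B₂ → ℝ) (g₁ : G₁) : ℝ :=
  ∑ y : Y, ∑ a : A, ∑ g₂ : G₂, ∑ b₂ : B₂, p (y, a, g₁, g₂, b₂)

/-- Marginal `p(g₂)`. -/
def pG2 (p : Y × A × G₁ × G₂ × B₂ → ℝ) (g₂ : G₂) : ℝ :=
  ∑ y : Y, ∑ a : A, ∑ g₁ : G₁, ∑ b₂ : B₂, p (y, a, g₁, g₂, b₂)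

/-- Marginal `p(b₂)`. -/
def pB2 (p : Y × A × G₁ × G₂ × B₂ → ℝ) (b₂ : B₂) : ℝ :=
  ∑ y : Y, ∑ a : A, ∑ g₁ : G₁, ∑ g₂ : G₂, p (y, a, g₁, g₂, b₂)

/-- Marginal `p(g₂, b₂)`. -/
def pG2B2 (p : Y × A × G₁ × G₂ × B₂ → ℝ) (g₂ : G₂) (b₂ : B₂) : ℝ :=
  ∑ y : Y, ∑ a : A, ∑ g₁ : G₁, p (y, a, g₁, g₂, b₂)

/-- Marginal `p(a, g₁, b₂)`. -/
def pAG1B2 (p : Y × A × G₁ × G₂ × B₂ → ℝ) (a : A) (g₁ : G₁) (b₂ : B₂) : ℝ :=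
  ∑ y : Y, ∑ g₂ : G₂, p (y, a, g₁, g₂, b₂)

/-- Marginal `p(a, g₁, g₂, b₂)`. -/
def pAG1G2B2 (p : Y × A × G₁ × G₂ × B₂ → ℝ) (a : A) (g₁ : G₁) (g₂ : G₂) (b₂ : B₂) : ℝ :=
  ∑ y : Y, p (y, a, g₁, g₂, b₂)

/-- Marginal `p(a, g₁, g₂)`. -/
def pAG1G2 (p : Y × A × G₁ × G₂ × B₂ → ℝ) (a : A) (g₁ : G₁) (g₂ : G₂) : ℝ :=
  ∑ y : Y, ∑ b₂ : B₂, p (y, a, g₁, g₂, b₂)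

/-- Outcome regression `m₁(g₁,b₂) = ∑_y y·p(y | a, g₁, b₂)` for the
adjustment set `(G₁, B₂)`. -/
def m1 (p : Y × A × G₁ × G₂ × B₂ → ℝ) (a : A) (g₁ : G₁) (b₂ : B₂) : ℝ :=
  ∑ y : Y, (y : ℝ) * ((∑ g₂ : G₂, p (y, a, g₁, g₂, b₂)) / pAG1B2 p a g₁ b₂)

/-- Outcome regression `m₂(g₁,g₂,b₂) = ∑_y y·p(y | a, g₁, g₂, b₂)` for the
adjustment set `(G₁, (G₂, B₂))`. -/
def m2 (p : Y × A × G₁ × G₂ × B₂ → ℝ) (a : A) (g₁ : G₁) (g₂ : G₂) (b₂ : B₂) : ℝ :=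
  ∑ y : Y, (y : ℝ) * (p (y, a, g₁, g₂, b₂) / pAG1G2B2 p a g₁ g₂ b₂)

/-- Outcome regression `m₃(g₁,g₂) = ∑_y y·p(y | a, g₁, g₂)` for the
adjustment set `(G₁, G₂)`. -/
def m3 (p : Y × A × G₁ × G₂ × B₂ → ℝ) (a : A) (g₁ : G₁) (g₂ : G₂) : ℝ :=
  ∑ y : Y, (y : ℝ) * ((∑ b₂ : B₂, p (y, a, g₁, g₂, b₂)) / pAG1G2 p a g₁ g₂)

/-- Target parameter for the adjustment set `(G₁, B₂)`. -/
def T1 (p : Y × A × G₁ × G₂ × B₂ → ℝ) (a : A) : ℝ :=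
  ∑ g₁ : G₁, pG1 p g₁ * ∑ b₂ : B₂, pB2 p b₂ * m1 p a g₁ b₂

/-- Target parameter for the adjustment set `(G₁, (G₂, B₂))`. -/
def T2 (p : Y × A × G₁ × G₂ × B₂ → ℝ) (a : A) : ℝ :=
  ∑ g₁ : G₁, pG1 p g₁ * ∑ g₂ : G₂, ∑ b₂ : B₂, pG2B2 p g₂ b₂ * m2 p a g₁ g₂ b₂

/-- Target parameter for the adjustment set `(G₁, G₂)`. -/
def T3 (p : Y × A × G₁ × G₂ × B₂ → ℝ) (a : A) : ℝ :=
  ∑ g₁ : G₁, pG1 p g₁ * ∑ g₂ : G₂, pG2 p g₂ * m3 p a g₁ g₂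

/-- Influence function `ψ_a^{G₁,B₂}` for the adjustment set `(G₁, B₂)`. -/
def psi1 (p : Y × A × G₁ × G₂ × B₂ → ℝ) (a : A)
    (y : Y) (a' : A) (g₁ : G₁) (b₂ : B₂) : ℝ :=
  (if a' = a then (1 : ℝ) else 0) * (pG1 p g₁ * pB2 p b₂ / pAG1B2 p a g₁ b₂) *
      ((y : ℝ) - m1 p a g₁ b₂)
    + (∑ b₂' : B₂, pB2 p b₂' * m1 p a g₁ b₂')
    + (∑ g₁' : G₁, pG1 p g₁' * m1 p a g₁' b₂)
    - 2 * T1 p a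

/-- Influence function `ψ_a^{G₁,(G₂,B₂)}` for the adjustment set `(G₁, (G₂, B₂))`. -/
def psi2 (p : Y × A × G₁ × G₂ × B₂ → ℝ) (a : A)
    (y : Y) (a' : A) (g₁ : G₁) (g₂ : G₂) (b₂ : B₂) : ℝ :=
  (if a' = a then (1 : ℝ) else 0) *
      (pG1 p g₁ * pG2B2 p g₂ b₂ / pAG1G2B2 p a g₁ g₂ b₂) *
      ((y : ℝ) - m2 p a g₁ g₂ b₂)
    + (∑ g₂' : G₂, ∑ b₂' : B₂, pG2B2 p g₂' b₂' * m2 p a g₁ g₂' b₂')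
    + (∑ g₁' : G₁, pG1 p g₁' * m2 p a g₁' g₂ b₂)
    - 2 * T2 p a

/-- Influence function `ψ_a^{G₁,G₂}` for the adjustment set `(G₁, G₂)`. -/
def psi3 (p : Y × A × G₁ × G₂ × B₂ → ℝ) (a : A)
    (y : Y) (a' : A) (g₁ : G₁) (g₂ : G₂) : ℝ :=
  (if a' = a then (1 : ℝ) else 0) * (pG1 p g₁ * pG2 p g₂ / pAG1G2 p a g₁ g₂) *
      ((y : ℝ) - m3 p a g₁ g₂)
    + (∑ g₂' : G₂, pG2 p g₂' * m3 p a g₁ g₂')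
    + (∑ g₁' : G₁, pG1 p g₁' * m3 p a g₁' g₂)
    - 2 * T3 p a

/-- Conditional independence `G₂ ⊥ (A, G₁) | B₂` under `p`. -/
def CI_G2_AG1_B2 (p : Y × A × G₁ × G₂ × B₂ → ℝ) : Prop :=
  ∀ (g₂ : G₂) (a : A) (g₁ : G₁) (b₂ : B₂),
    (∑ y : Y, p (y, a, g₁, g₂, b₂)) / pB2 p b₂ =
      (pG2B2 p g₂ b₂ / pB2 p b₂) * (pAG1B2 p a g₁ b₂ / pB2 p b₂)

/-- Conditional independence `Y ⊥ B₂ | (A, G₁, G₂)` under `p`. -/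
def CI_Y_B2_AG1G2 (p : Y × A × G₁ × G₂ × B₂ → ℝ) : Prop :=
  ∀ (y : Y) (a : A) (g₁ : G₁) (g₂ : G₂) (b₂ : B₂),
    p (y, a, g₁, g₂, b₂) / pAG1G2 p a g₁ g₂ =
      ((∑ b₂' : B₂, p (y, a, g₁, g₂, b₂')) / pAG1G2 p a g₁ g₂) *
        (pAG1G2B2 p a g₁ g₂ b₂ / pAG1G2 p a g₁ g₂)

/-- Variance of a real function of the observation under `p`. -/
def VarP (p : Y × A × G₁ × G₂ × B₂ → ℝ) (f : Y × A × G₁ × G₂ × B₂ → ℝ) : ℝ :=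
  (∑ o : Y × A × G₁ × G₂ × B₂, p o * f o ^ 2) -
    (∑ o : Y × A × G₁ × G₂ × B₂, p o * f o) ^ 2

/-- Lemma 4.1 (uniqueness across valid adjustment sets): under
`G₂ ⊥ (A, G₁) | B₂`, the adjusted functionals for `(G₁, (G₂,B₂))` and
`(G₁, B₂)` coincide. -/
theorem adjusted_functionals_coincide
    (p : Y × A × G₁ × G₂ × B₂ → ℝ)
    (hpos : ∀ o, 0 < p o) (hsum : ∑ o, p o = 1) (a : A)
    (hCI : CI_G2_AG1_B2 p) :
    ∑ g₁ : G₁, pG1 p g₁ *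
        ∑ g₂ : G₂, ∑ b₂ : B₂, pG2B2 p g₂ b₂ * m2 p a g₁ g₂ b₂ =
      ∑ g₁ : G₁, pG1 p g₁ * ∑ b₂ : B₂, pB2 p b₂ * m1 p a g₁ b₂ := by
  have hne : Nonempty (Y × A × G₁ × G₂ × B₂) := by
    by_contra h
    rw [not_nonempty_iff] at h
    rw [Finset.univ_eq_empty, Finset.sum_empty] at hsum
    norm_num at hsum
  obtain ⟨⟨y0, a0, g10, g20, b20⟩⟩ := hne
  haveI : Nonempty Y := ⟨y0⟩
  haveI : Nonempty A := ⟨a0⟩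
  haveI : Nonempty G₁ := ⟨g10⟩
  haveI : Nonempty G₂ := ⟨g20⟩
  haveI : Nonempty B₂ := ⟨b20⟩
  have hB2pos : ∀ b₂, 0 < pB2 p b₂ := fun b₂ =>
    Finset.sum_pos (fun y _ => Finset.sum_pos (fun a' _ => Finset.sum_pos
      (fun g₁ _ => Finset.sum_pos (fun g₂ _ => hpos _) univ_nonempty)
      univ_nonempty) univ_nonempty) univ_nonempty
  have hAG1B2pos : ∀ a' g₁ b₂, 0 < pAG1B2 p a' g₁ b₂ := fun a' g₁ b₂ =>
    Finset.sum_pos (fun y _ => Finset.sum_pos (fun g₂ _ => hpos _) univ_nonempty)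
      univ_nonempty
  have hAG1G2B2pos : ∀ a' g₁ g₂ b₂, 0 < pAG1G2B2 p a' g₁ g₂ b₂ := fun a' g₁ g₂ b₂ =>
    Finset.sum_pos (fun y _ => hpos _) univ_nonempty
  have hkey : ∀ g₂ g₁ b₂,
      pAG1G2B2 p a g₁ g₂ b₂ * pB2 p b₂ = pG2B2 p g₂ b₂ * pAG1B2 p a g₁ b₂ := by
    intro g₂ g₁ b₂
    have h := hCI g₂ a g₁ b₂
    have hsum' : (∑ y : Y, p (y, a, g₁, g₂, b₂)) = pAG1G2B2 p a g₁ g₂ b₂ := rfl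
    rw [hsum'] at h
    have hb := (hB2pos b₂).ne'
    field_simp at h
    exact mul_right_cancel₀ hb (by linear_combination (pB2 p b₂) * h)
  have step : ∀ g₁ b₂,
      ∑ g₂ : G₂, pG2B2 p g₂ b₂ * m2 p a g₁ g₂ b₂ = pB2 p b₂ * m1 p a g₁ b₂ := by
    intro g₁ b₂
    have h1 : ∀ g₂ : G₂, pG2B2 p g₂ b₂ * m2 p a g₁ g₂ b₂ =
        (pB2 p b₂ / pAG1B2 p a g₁ b₂) * ∑ y : Y, (y : ℝ) * p (y, a, g₁, g₂, b₂) := by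
      intro g₂
      unfold m2
      rw [Finset.mul_sum, Finset.mul_sum]
      refine Finset.sum_congr rfl fun y _ => ?_
      have hk := hkey g₂ g₁ b₂
      have h2 := (hAG1G2B2pos a g₁ g₂ b₂).ne'
      have h3 := (hAG1B2pos a g₁ b₂).ne'
      field_simp
      linear_combination (-(↑y * p (y, a, g₁, g₂, b₂))) * hk
    rw [Finset.sum_congr rfl fun g₂ _ => h1 g₂, ← Finset.mul_sum, Finset.sum_comm]
    unfold m1
    have h3 := (hAG1B2pos a g₁ b₂).ne'
    rw [Finset.mul_sum, Finset.mul_sum]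
    refine Finset.sum_congr rfl fun y _ => ?_
    rw [← Finset.mul_sum]
    field_simp
  refine Finset.sum_congr rfl fun g₁ _ => ?_
  congr 1
  rw [Finset.sum_comm]
  exact Finset.sum_congr rfl fun b₂ _ => step g₁ b₂

end
end

section
/- Let 𝒴 ⊂ ℝ be a finite set, let 𝒜, 𝒢₁, 𝒢₂, ℬ₂ be finite types, let p be a strictly positive probability mass function on 𝒴 × 𝒜 × 𝒢₁ × 𝒢₂ × ℬ₂, and fix a ∈ 𝒜. If Y ⊥ B₂ | (A, G₁, G₂) under p, then for all (y, g₁, g₂): ∑_{b₂} ( p(g₁)·p(g₂,b₂) / p(a,g₁,g₂,b₂) ) · p(b₂ | A=a, Y=y, G₁=g₁, G₂=g₂) = p(g₁)·p(g₂) / p(a,g₁,g₂). -/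
open Finset

noncomputable section

variable {Y : Finset ℝ} {A G₁ G₂ B₂ : Type}
variable [Fintype A] [Fintype G₁] [Fintype G₂] [Fintype B₂] [DecidableEq A]

/-- Key density-ratio computation in the proof of Lemma 4.2 (deletion of
overadjustment backdoor variables): under `Y ⊥ B₂ | (A, G₁, G₂)`, the
conditional expectation of the inverse-probability weight for the larger
adjustment set collapses to the weight for the smaller set. -/
theorem weight_collapse
    (p : Y × A × G₁ × G₂ × B₂ → ℝ)
    (hpos : ∀ o, 0 < p o) (hsum : ∑ o, p o = 1) (a : A)
    (hCI : CI_Y_B2_AG1G2 p) :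
    ∀ (y : Y) (g₁ : G₁) (g₂ : G₂),
      ∑ b₂ : B₂,
        (pG1 p g₁ * pG2B2 p g₂ b₂ / pAG1G2B2 p a g₁ g₂ b₂) *
          (p (y, a, g₁, g₂, b₂) / (∑ b₂' : B₂, p (y, a, g₁, g₂, b₂'))) =
        pG1 p g₁ * pG2 p g₂ / pAG1G2 p a g₁ g₂ := by
  intro y g₁ g₂
  -- nonemptiness of all factors
  have hne : Nonempty (Y × A × G₁ × G₂ × B₂) := by
    by_contra h
    rw [not_nonempty_iff] at h
    simp [Finset.univ_eq_empty] at hsum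
  obtain ⟨⟨y0, a0, g10, g20, b20⟩⟩ := hne
  have hYne : (Finset.univ : Finset Y).Nonempty := ⟨y0, Finset.mem_univ _⟩
  have hBne : (Finset.univ : Finset B₂).Nonempty := ⟨b20, Finset.mem_univ _⟩
  -- positivity facts
  have hP1 : ∀ b₂ : B₂, 0 < pAG1G2B2 p a g₁ g₂ b₂ := fun b₂ =>
    Finset.sum_pos (fun _ _ => hpos _) hYne
  have hP2 : 0 < pAG1G2 p a g₁ g₂ :=
    Finset.sum_pos (fun _ _ => Finset.sum_pos (fun _ _ => hpos _) hBne) hYne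
  have hPy : 0 < ∑ b₂' : B₂, p (y, a, g₁, g₂, b₂') :=
    Finset.sum_pos (fun _ _ => hpos _) hBne
  -- key identity from conditional independence
  have hkey : ∀ b₂ : B₂,
      p (y, a, g₁, g₂, b₂) * pAG1G2 p a g₁ g₂ =
        (∑ b₂' : B₂, p (y, a, g₁, g₂, b₂')) * pAG1G2B2 p a g₁ g₂ b₂ := by
    intro b₂
    have h := hCI y a g₁ g₂ b₂
    field_simp at h
    exact h
  -- each summand equals pG1 * pG2B2 / pAG1G2
  have hterm : ∀ b₂ : B₂,
      (pG1 p g₁ * pG2B2 p g₂ b₂ / pAG1G2B2 p a g₁ g₂ b₂) *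
        (p (y, a, g₁, g₂, b₂) / (∑ b₂' : B₂, p (y, a, g₁, g₂, b₂'))) =
      pG1 p g₁ * pG2B2 p g₂ b₂ / pAG1G2 p a g₁ g₂ := by
    intro b₂
    have h1 := (hP1 b₂).ne'
    have h2 := hP2.ne'
    have h3 := hPy.ne'
    field_simp
    rw [mul_assoc (pG1 p g₁ * pG2B2 p g₂ b₂) (p (y, a, g₁, g₂, b₂)), hkey b₂]
    ring
  rw [Finset.sum_congr rfl (fun b₂ _ => hterm b₂), ← Finset.sum_div,
    ← Finset.mul_sum]
  congr 2
  unfold pG2B2 pG2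
  rw [Finset.sum_comm]
  refine Finset.sum_congr rfl fun y' _ => ?_
  rw [Finset.sum_comm]
  refine Finset.sum_congr rfl fun a' _ => ?_
  rw [Finset.sum_comm]

end
end
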